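/- Let n, p ∈ ℕ, let A, B ∈ ℝ^{p×n}, assume the p×2n matrix (A B) has rank p, and let G be the linear relation with graph gra G = {(x,x*) ∈ ℝⁿ × ℝⁿ : Ax + Bx* = 0}. Define the linear relation Ĝ by gra Ĝ = {(Bᵀu, −Aᵀu) : u ∈ V₋(BAᵀ) + V₀(BAᵀ)}. Then G is monotone if and only if Ĝ is maximally monotone. -/

import Mathlib

open Matrix Pointwise

/-- Sum of the eigenspaces of `M + Mᵀ` corresponding to positive eigenvalues. -/
noncomputable def Vpos {m : ℕ} (M : Matrix (Fin m) (Fin m) ℝ) :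
    Submodule ℝ (Fin m → ℝ) :=
  ⨆ μ : {t : ℝ // 0 < t}, Module.End.eigenspace (Matrix.mulVecLin (M + Mᵀ)) (μ : ℝ)

/-- Eigenspace of `M + Mᵀ` for the eigenvalue `0`. -/
noncomputable def Vzero {m : ℕ} (M : Matrix (Fin m) (Fin m) ℝ) :
    Submodule ℝ (Fin m → ℝ) :=
  Module.End.eigenspace (Matrix.mulVecLin (M + Mᵀ)) 0

/-- Sum of the eigenspaces of `M + Mᵀ` corresponding to negative eigenvalues. -/
noncomputable def Vneg {m : ℕ} (M : Matrix (Fin m) (Fin m) ℝ) :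
    Submodule ℝ (Fin m → ℝ) :=
  ⨆ μ : {t : ℝ // t < 0}, Module.End.eigenspace (Matrix.mulVecLin (M + Mᵀ)) (μ : ℝ)

/-- A set `S ⊆ ℝⁿ × ℝⁿ` is monotone. -/
def IsMonotoneSet {n : ℕ} (S : Set ((Fin n → ℝ) × (Fin n → ℝ))) : Prop :=
  ∀ a ∈ S, ∀ b ∈ S, 0 ≤ (a.1 - b.1) ⬝ᵥ (a.2 - b.2)

/-- A set `S ⊆ ℝⁿ × ℝⁿ` is maximally monotone. -/
def IsMaxMonotoneSet {n : ℕ} (S : Set ((Fin n → ℝ) × (Fin n → ℝ))) : Prop :=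
  IsMonotoneSet S ∧ ∀ a, (∀ b ∈ S, 0 ≤ (a.1 - b.1) ⬝ᵥ (a.2 - b.2)) → a ∈ S

/-- Graph of the adjoint relation: `(x, x*) ∈ gra T*` iff `(x*, -x) ⟂ gra T`. -/
def adjGraph {n : ℕ} (S : Set ((Fin n → ℝ) × (Fin n → ℝ))) :
    Set ((Fin n → ℝ) × (Fin n → ℝ)) :=
  {q | ∀ s ∈ S, q.2 ⬝ᵥ s.1 - q.1 ⬝ᵥ s.2 = 0}

section Stmt11Aux

open Module Submodule

private lemma dotSelf_nonneg {m : ℕ} (v : Fin m → ℝ) : 0 ≤ v ⬝ᵥ v :=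
  Finset.sum_nonneg fun _ _ => mul_self_nonneg _

private lemma dotSelf_pos {m : ℕ} {v : Fin m → ℝ} (hv : v ≠ 0) : 0 < v ⬝ᵥ v :=
  (dotSelf_nonneg v).lt_of_ne fun h => hv (dotProduct_self_eq_zero.mp h.symm)

private lemma finrank_fun (m : ℕ) : finrank ℝ (Fin m → ℝ) = m := by
  simp [Module.finrank_pi]

private lemma finrank_prod_fun (n : ℕ) :
    finrank ℝ ((Fin n → ℝ) × (Fin n → ℝ)) = n + n := by
  rw [Module.finrank_prod, finrank_fun]

private lemma sum_dot {m : ℕ} {ι : Type*} (s : Finset ι) (g : ι → (Fin m → ℝ))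
    (w : Fin m → ℝ) : (∑ i ∈ s, g i) ⬝ᵥ w = ∑ i ∈ s, g i ⬝ᵥ w := by
  induction s using Finset.cons_induction with
  | empty => simp
  | cons a s ha ih => simp [Finset.sum_cons, add_dotProduct, ih]

private lemma dot_sum {m : ℕ} {ι : Type*} (s : Finset ι) (g : ι → (Fin m → ℝ))
    (w : Fin m → ℝ) : w ⬝ᵥ (∑ i ∈ s, g i) = ∑ i ∈ s, w ⬝ᵥ g i := by
  induction s using Finset.cons_induction with
  | empty => simp
  | cons a s ha ih => simp [Finset.sum_cons, dotProduct_add, ih]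

private lemma dim_le_of_sign {n : ℕ} (ε : ℝ) (hε : ε = 1 ∨ ε = -1)
    {S : Submodule ℝ ((Fin n → ℝ) × (Fin n → ℝ))}
    (hS : ∀ z ∈ S, 0 ≤ ε * (z.1 ⬝ᵥ z.2)) : finrank ℝ S ≤ n := by
  set g : (Fin n → ℝ) →ₗ[ℝ] ((Fin n → ℝ) × (Fin n → ℝ)) :=
    LinearMap.prod LinearMap.id (-(ε • LinearMap.id)) with hg
  have hginj : Function.Injective g := fun x y h => congrArg Prod.fst h
  have hPd : finrank ℝ (LinearMap.range g) = n := by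
    rw [LinearMap.finrank_range_of_inj hginj, finrank_fun]
  have hinf : S ⊓ LinearMap.range g = ⊥ := by
    rw [eq_bot_iff]
    rintro z hz
    obtain ⟨x, rfl⟩ := LinearMap.mem_range.mp hz.2
    have h1 := hS _ hz.1
    have hgx1 : (g x).1 = x := rfl
    have hgx2 : (g x).2 = -(ε • x) := rfl
    rw [hgx1, hgx2] at h1
    have h2 : ε * (x ⬝ᵥ (-(ε • x))) = -(ε * ε * (x ⬝ᵥ x)) := by
      rw [dotProduct_neg, dotProduct_smul]
      simp [mul_assoc]
    rw [h2] at h1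
    have hee : ε * ε = 1 := by rcases hε with rfl | rfl <;> norm_num
    rw [hee, one_mul] at h1
    have hx : x = 0 := by
      have h3 := dotSelf_nonneg x
      have : x ⬝ᵥ x = 0 := le_antisymm (by linarith) h3
      exact dotProduct_self_eq_zero.mp this
    subst hx
    simp [Submodule.mem_bot]
  have hsum := Submodule.finrank_sup_add_finrank_inf_eq S (LinearMap.range g)
  have hle := Submodule.finrank_le (S ⊔ LinearMap.range g)
  rw [finrank_prod_fun] at hle
  rw [hinf, finrank_bot, hPd] at hsum
  omega

private lemma isMax_of_dim {n : ℕ} {S : Submodule ℝ ((Fin n → ℝ) × (Fin n → ℝ))}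
    (hS : ∀ z ∈ S, 0 ≤ z.1 ⬝ᵥ z.2) (hd : finrank ℝ S = n) :
    IsMaxMonotoneSet (S : Set ((Fin n → ℝ) × (Fin n → ℝ))) := by
  constructor
  · intro a ha b hb
    exact hS _ (S.sub_mem ha hb)
  · intro a ha
    have hmono' : ∀ z ∈ S ⊔ (ℝ ∙ a), 0 ≤ z.1 ⬝ᵥ z.2 := by
      intro z hz
      obtain ⟨s, hs, w, hw, rfl⟩ := Submodule.mem_sup.mp hz
      obtain ⟨t, rfl⟩ := Submodule.mem_span_singleton.mp hw
      rcases eq_or_ne t 0 with rfl | ht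
      · simpa using hS _ hs
      · have hb : -(t⁻¹) • s ∈ S := S.smul_mem _ hs
        have h2 := ha _ hb
        have h2' : 0 ≤ (a - (-(t⁻¹) • s)).1 ⬝ᵥ (a - (-(t⁻¹) • s)).2 := h2
        have key : s + t • a = t • (a - (-(t⁻¹) • s)) := by
          rw [neg_smul, sub_neg_eq_add, smul_add, smul_smul, mul_inv_cancel₀ ht,
            one_smul, add_comm]
        rw [key]
        have hcomp : (t • (a - (-(t⁻¹) • s))).1 ⬝ᵥ (t • (a - (-(t⁻¹) • s))).2 =
            t * (t * ((a - (-(t⁻¹) • s)).1 ⬝ᵥ (a - (-(t⁻¹) • s)).2)) := by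
          rw [Prod.smul_fst, Prod.smul_snd, smul_dotProduct, dotProduct_smul,
            smul_eq_mul, smul_eq_mul]
        rw [hcomp]
        nlinarith [mul_nonneg (mul_self_nonneg t) h2']
    have heq : S = S ⊔ (ℝ ∙ a) := by
      apply Submodule.eq_of_le_of_finrank_le le_sup_left
      rw [hd]
      exact dim_le_of_sign 1 (Or.inl rfl) (by simpa using hmono')
    have haS' : a ∈ S ⊔ (ℝ ∙ a) :=
      Submodule.mem_sup_right (Submodule.mem_span_singleton_self a)
    rwa [← heq] at haS'

private lemma finrank_map_inj {m n : ℕ} {f : (Fin m → ℝ) →ₗ[ℝ] ((Fin n → ℝ) × (Fin n → ℝ))}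
    (hf : Function.Injective f) (U : Submodule ℝ (Fin m → ℝ)) :
    finrank ℝ (Submodule.map f U) = finrank ℝ U := by
  have h : Submodule.map f U = LinearMap.range (f.comp U.subtype) := by
    rw [LinearMap.range_comp, Submodule.range_subtype]
  rw [h]
  apply LinearMap.finrank_range_of_inj
  rw [LinearMap.coe_comp]
  exact hf.comp U.injective_subtype

private lemma phi_sub {n : ℕ} (a b : (Fin n → ℝ) × (Fin n → ℝ)) :
    (a - b).1 ⬝ᵥ (a - b).2 =
      a.1 ⬝ᵥ a.2 + b.1 ⬝ᵥ b.2 - (a.1 ⬝ᵥ b.2 + b.1 ⬝ᵥ a.2) := by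
  rw [Prod.fst_sub, Prod.snd_sub, sub_dotProduct, dotProduct_sub, dotProduct_sub]
  rw [dotProduct_comm b.1 a.2]
  ring

private lemma phi_add {n : ℕ} (a b : (Fin n → ℝ) × (Fin n → ℝ)) :
    (a + b).1 ⬝ᵥ (a + b).2 =
      a.1 ⬝ᵥ a.2 + b.1 ⬝ᵥ b.2 + (a.1 ⬝ᵥ b.2 + b.1 ⬝ᵥ a.2) := by
  rw [Prod.fst_add, Prod.snd_add, add_dotProduct, dotProduct_add, dotProduct_add]
  rw [dotProduct_comm b.1 a.2]
  ring

private lemma dot_mulVec_transpose {p : ℕ} (M : Matrix (Fin p) (Fin p) ℝ) (u : Fin p → ℝ) :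
    u ⬝ᵥ (Mᵀ *ᵥ u) = u ⬝ᵥ (M *ᵥ u) := by
  rw [dotProduct_mulVec, vecMul_transpose, dotProduct_comm]

section Eigen

variable {m : ℕ} {Q : Matrix (Fin m) (Fin m) ℝ}

private lemma eig_mem_iff {μ : ℝ} {u : Fin m → ℝ} :
    u ∈ Module.End.eigenspace Q.mulVecLin μ ↔ Q *ᵥ u = μ • u := by
  rw [Module.End.mem_eigenspace_iff, Matrix.mulVecLin_apply]

private lemma eig_orth (hQ : Qᵀ = Q) {μ ν : ℝ} {u w : Fin m → ℝ} (hμν : μ ≠ ν)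
    (hu : u ∈ Module.End.eigenspace Q.mulVecLin μ)
    (hw : w ∈ Module.End.eigenspace Q.mulVecLin ν) : u ⬝ᵥ w = 0 := by
  rw [eig_mem_iff] at hu hw
  have h1 : u ⬝ᵥ (Q *ᵥ w) = ν * (u ⬝ᵥ w) := by
    rw [hw, dotProduct_smul, smul_eq_mul]
  have h2 : u ⬝ᵥ (Q *ᵥ w) = μ * (u ⬝ᵥ w) := by
    rw [dotProduct_mulVec]
    have huQ : u ᵥ* Q = μ • u := by
      rw [← hQ, vecMul_transpose, hu]
    rw [huQ, smul_dotProduct, smul_eq_mul]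
  have h3 : (μ - ν) * (u ⬝ᵥ w) = 0 := by
    rw [sub_mul, ← h2, ← h1, sub_self]
  exact (mul_eq_zero.mp h3).resolve_left (sub_ne_zero.mpr hμν)

private lemma quad_of_mem_iSup (hQ : Qᵀ = Q) {P : ℝ → Prop} {u : Fin m → ℝ}
    (hu : u ∈ ⨆ μ : {t : ℝ // P t}, Module.End.eigenspace Q.mulVecLin (μ : ℝ)) :
    ∃ f : {t : ℝ // P t} →₀ (Fin m → ℝ),
      (∀ i : {t : ℝ // P t}, f i ∈ Module.End.eigenspace Q.mulVecLin (i.1 : ℝ)) ∧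
      (∑ i ∈ f.support, f i) = u ∧
      u ⬝ᵥ (Q *ᵥ u) = ∑ i ∈ f.support, (i.1 : ℝ) * (f i ⬝ᵥ f i) := by
  obtain ⟨f, hf, hsum⟩ := (Submodule.mem_iSup_iff_exists_finsupp _ u).mp hu
  have hsum' : (∑ i ∈ f.support, f i) = u := hsum
  refine ⟨f, hf, hsum', ?_⟩
  have hQu : Q *ᵥ u = ∑ i ∈ f.support, (i.1 : ℝ) • f i := by
    have h0 : Q *ᵥ u = ∑ i ∈ f.support, Q *ᵥ f i := by
      rw [← hsum']
      exact map_sum Q.mulVecLin (fun i => f i) f.support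
    rw [h0]
    exact Finset.sum_congr rfl fun i _ => eig_mem_iff.mp (hf i)
  conv_lhs => rw [hQu, ← hsum']
  rw [sum_dot]
  refine Finset.sum_congr rfl fun i hi => ?_
  rw [dot_sum]
  rw [Finset.sum_eq_single i]
  · rw [dotProduct_smul, smul_eq_mul]
  · intro j hj hji
    rw [dotProduct_smul, smul_eq_mul]
    have : f i ⬝ᵥ f j = 0 :=
      eig_orth hQ (fun h => hji (Subtype.ext h.symm)) (hf i) (hf j)
    rw [this, mul_zero]
  · intro hi'
    exact absurd hi hi'

private lemma sup_negzero_eq (Q : Matrix (Fin m) (Fin m) ℝ) :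
    (⨆ μ : {t : ℝ // t < 0}, Module.End.eigenspace Q.mulVecLin (μ : ℝ)) ⊔
      Module.End.eigenspace Q.mulVecLin 0 =
    ⨆ μ : {t : ℝ // t ≤ 0}, Module.End.eigenspace Q.mulVecLin (μ : ℝ) := by
  apply le_antisymm
  · apply sup_le
    · exact iSup_le fun μ => le_iSup_of_le ⟨μ.1, μ.2.le⟩ (le_refl _)
    · exact le_iSup_of_le ⟨0, le_refl 0⟩ (le_refl _)
  · apply iSup_le
    intro μ
    rcases lt_or_eq_of_le μ.2 with h | h
    · exact le_sup_of_le_left (le_iSup_of_le ⟨μ.1, h⟩ (le_refl _))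
    · exact le_sup_of_le_right (by rw [h])

private lemma quad_nonpos (hQ : Qᵀ = Q) {u : Fin m → ℝ}
    (hu : u ∈ ⨆ μ : {t : ℝ // t ≤ 0}, Module.End.eigenspace Q.mulVecLin (μ : ℝ)) :
    u ⬝ᵥ (Q *ᵥ u) ≤ 0 := by
  obtain ⟨f, hf, _, hquad⟩ := quad_of_mem_iSup hQ hu
  rw [hquad]
  apply Finset.sum_nonpos
  intro i _
  have h1 := dotSelf_nonneg (f i)
  have h2 := i.2
  nlinarith

private lemma quad_pos (hQ : Qᵀ = Q) {u : Fin m → ℝ}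
    (hu : u ∈ ⨆ μ : {t : ℝ // 0 < t}, Module.End.eigenspace Q.mulVecLin (μ : ℝ))
    (hu0 : u ≠ 0) : 0 < u ⬝ᵥ (Q *ᵥ u) := by
  obtain ⟨f, hf, hsum, hquad⟩ := quad_of_mem_iSup hQ hu
  rw [hquad]
  apply Finset.sum_pos
  · intro i hi
    exact mul_pos i.2 (dotSelf_pos (Finsupp.mem_support_iff.mp hi))
  · rw [Finset.nonempty_iff_ne_empty]
    intro h
    exact hu0 (by rw [← hsum, h, Finset.sum_empty])

private lemma eig_sup_top (hQ : Qᵀ = Q) :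
    (⨆ μ : {t : ℝ // 0 < t}, Module.End.eigenspace Q.mulVecLin (μ : ℝ)) ⊔
      ((⨆ μ : {t : ℝ // t < 0}, Module.End.eigenspace Q.mulVecLin (μ : ℝ)) ⊔
        Module.End.eigenspace Q.mulVecLin 0) = ⊤ := by
  rw [eq_top_iff]
  intro u _
  have hherm : Q.IsHermitian := by
    rw [Matrix.IsHermitian, Matrix.conjTranspose_eq_transpose_of_trivial, hQ]
  set U := hherm.eigenvectorUnitary with hUdef
  set v := hherm.eigenvectorBasis with hvdef
  have hU : (U : Matrix (Fin m) (Fin m) ℝ) * star (U : Matrix (Fin m) (Fin m) ℝ) = 1 :=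
    Matrix.mem_unitaryGroup_iff.mp U.2
  set c : Fin m → ℝ := star (U : Matrix (Fin m) (Fin m) ℝ) *ᵥ u with hc
  have h2 : c = ∑ j, c j • (Pi.single j (1:ℝ) : Fin m → ℝ) := by
    funext i
    rw [Finset.sum_apply]
    simp [Pi.single_apply]
  have hu' : u = ∑ j, c j • ⇑(v j) := by
    have h1 : u = (U : Matrix (Fin m) (Fin m) ℝ) *ᵥ c := by
      rw [hc, Matrix.mulVec_mulVec, hU, Matrix.one_mulVec]
    rw [h1]
    conv_lhs => rw [h2]
    have h3 := map_sum ((U : Matrix (Fin m) (Fin m) ℝ).mulVecLin)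
      (fun j => c j • (Pi.single j (1:ℝ) : Fin m → ℝ)) Finset.univ
    simp only [Matrix.mulVecLin_apply] at h3
    rw [h3]
    refine Finset.sum_congr rfl fun j _ => ?_
    rw [Matrix.mulVec_smul, hherm.eigenvectorUnitary_mulVec j]
  rw [hu']
  refine Submodule.sum_mem _ fun j _ => ?_
  have hvj : ⇑(v j) ∈ Module.End.eigenspace Q.mulVecLin (hherm.eigenvalues j) :=
    eig_mem_iff.mpr (hherm.mulVec_eigenvectorBasis j)
  rcases lt_trichotomy (hherm.eigenvalues j) 0 with h | h | h
  · refine Submodule.mem_sup_right (Submodule.mem_sup_left ?_)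
    have hle : Module.End.eigenspace Q.mulVecLin (hherm.eigenvalues j) ≤
        ⨆ μ : {t : ℝ // t < 0}, Module.End.eigenspace Q.mulVecLin (μ : ℝ) :=
      le_iSup_of_le ⟨hherm.eigenvalues j, h⟩ (le_refl _)
    exact hle (Submodule.smul_mem _ _ hvj)
  · refine Submodule.mem_sup_right (Submodule.mem_sup_right ?_)
    rw [← h]
    exact Submodule.smul_mem _ _ hvj
  · refine Submodule.mem_sup_left ?_
    have hle : Module.End.eigenspace Q.mulVecLin (hherm.eigenvalues j) ≤
        ⨆ μ : {t : ℝ // 0 < t}, Module.End.eigenspace Q.mulVecLin (μ : ℝ) :=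
      le_iSup_of_le ⟨hherm.eigenvalues j, h⟩ (le_refl _)
    exact hle (Submodule.smul_mem _ _ hvj)

end Eigen

end Stmt11Aux

open Module Submodule

set_option maxHeartbeats 4000000 in
/-- `G` is monotone iff
`Ĝ = {(Bᵀu, −Aᵀu) : u ∈ V₋(BAᵀ) + V₀(BAᵀ)}` is maximally monotone. -/
theorem stmt11 {n p : ℕ} (A B : Matrix (Fin p) (Fin n) ℝ)
    (hrank : (Matrix.fromCols A B).rank = p) :
    IsMonotoneSet {q : (Fin n → ℝ) × (Fin n → ℝ) | A *ᵥ q.1 + B *ᵥ q.2 = 0} ↔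
      IsMaxMonotoneSet ((fun u => (Bᵀ *ᵥ u, -(Aᵀ *ᵥ u))) ''
        ↑(Vneg (B * Aᵀ) ⊔ Vzero (B * Aᵀ))) := by
  classical
  set M : Matrix (Fin p) (Fin p) ℝ := B * Aᵀ with hM
  set Q : Matrix (Fin p) (Fin p) ℝ := M + Mᵀ with hQdef
  have hQsymm : Qᵀ = Q := by
    rw [hQdef, Matrix.transpose_add, Matrix.transpose_transpose, add_comm]
  have hVneg : Vneg M = ⨆ μ : {t : ℝ // t < 0},
      Module.End.eigenspace Q.mulVecLin (μ : ℝ) := rfl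
  have hVzero : Vzero M = Module.End.eigenspace Q.mulVecLin 0 := rfl
  have hVpos : Vpos M = ⨆ μ : {t : ℝ // 0 < t},
      Module.End.eigenspace Q.mulVecLin (μ : ℝ) := rfl
  have hWq : ∀ u ∈ Vneg M ⊔ Vzero M, u ⬝ᵥ (Q *ᵥ u) ≤ 0 := by
    intro u hu
    apply quad_nonpos hQsymm
    rw [← sup_negzero_eq Q]
    rw [hVneg, hVzero] at hu
    exact hu
  have hVq : ∀ u ∈ Vpos M, u ≠ 0 → 0 < u ⬝ᵥ (Q *ᵥ u) := fun u hu h0 =>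
    quad_pos hQsymm (hVpos ▸ hu) h0
  have hTopEq : Vpos M ⊔ (Vneg M ⊔ Vzero M) = ⊤ := by
    rw [hVpos, hVneg, hVzero]; exact eig_sup_top hQsymm
  have hInfBot : Vpos M ⊓ (Vneg M ⊔ Vzero M) = ⊥ := by
    rw [eq_bot_iff]
    intro u hu
    rw [Submodule.mem_bot]
    by_contra h0
    exact absurd (hWq u hu.2) (not_le.mpr (hVq u hu.1 h0))
  have hdimsum : finrank ℝ ↥(Vpos M) + finrank ℝ ↥(Vneg M ⊔ Vzero M) = p := by
    have h := Submodule.finrank_sup_add_finrank_inf_eq (Vpos M) (Vneg M ⊔ Vzero M)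
    rw [hTopEq, hInfBot, finrank_bot, finrank_top, finrank_fun] at h
    omega
  -- linear maps
  set Tlin : (Fin p → ℝ) →ₗ[ℝ] ((Fin n → ℝ) × (Fin n → ℝ)) :=
    LinearMap.prod (Bᵀ.mulVecLin) (-(Aᵀ.mulVecLin)) with hTdef
  set T'lin : (Fin p → ℝ) →ₗ[ℝ] ((Fin n → ℝ) × (Fin n → ℝ)) :=
    LinearMap.prod (Bᵀ.mulVecLin) (Aᵀ.mulVecLin) with hT'def
  set fL : ((Fin n → ℝ) × (Fin n → ℝ)) →ₗ[ℝ] (Fin p → ℝ) :=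
    (A.mulVecLin).comp (LinearMap.fst ℝ _ _) + (B.mulVecLin).comp (LinearMap.snd ℝ _ _)
    with hfLdef
  set L := LinearMap.ker fL with hLdef
  have hT1 : ∀ u, (Tlin u).1 = Bᵀ *ᵥ u := fun u => rfl
  have hT2 : ∀ u, (Tlin u).2 = -(Aᵀ *ᵥ u) := fun u => rfl
  have hT'1 : ∀ u, (T'lin u).1 = Bᵀ *ᵥ u := fun u => rfl
  have hT'2 : ∀ u, (T'lin u).2 = Aᵀ *ᵥ u := fun u => rfl
  have hfL : ∀ z, fL z = A *ᵥ z.1 + B *ᵥ z.2 := fun z => rfl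
  have hsetG : ((fun u => (Bᵀ *ᵥ u, -(Aᵀ *ᵥ u))) '' ↑(Vneg M ⊔ Vzero M)) =
      (↑(Submodule.map Tlin (Vneg M ⊔ Vzero M)) :
        Set ((Fin n → ℝ) × (Fin n → ℝ))) := by
    have hfun : (fun u => (Bᵀ *ᵥ u, -(Aᵀ *ᵥ u))) = ⇑Tlin := by
      funext u
      rfl
    rw [hfun, Submodule.map_coe]
  have hCrange : LinearMap.range (Matrix.fromCols A B).mulVecLin = ⊤ := by
    apply Submodule.eq_top_of_finrank_eq
    rw [finrank_fun]
    exact hrank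
  have hCsurj : Function.Surjective (Matrix.fromCols A B).mulVecLin :=
    LinearMap.range_eq_top.mp hCrange
  have hTker : ∀ u : Fin p → ℝ, Aᵀ *ᵥ u = 0 → Bᵀ *ᵥ u = 0 → u = 0 := by
    intro u hA0 hB0
    have hvm : u ᵥ* Matrix.fromCols A B = 0 := by
      rw [Matrix.vecMul_fromCols]
      have h1 : u ᵥ* A = 0 := by rw [← Matrix.mulVec_transpose]; exact hA0
      have h2 : u ᵥ* B = 0 := by rw [← Matrix.mulVec_transpose]; exact hB0
      rw [h1, h2]
      funext i; cases i <;> rfl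
    have hall : ∀ y, u ⬝ᵥ y = 0 := by
      intro y
      obtain ⟨x, hx⟩ := hCsurj y
      rw [← hx, Matrix.mulVecLin_apply, dotProduct_mulVec, hvm, zero_dotProduct]
    exact dotProduct_self_eq_zero.mp (hall u)
  have hTinj : Function.Injective Tlin := by
    intro x y hxy
    have h0 : Tlin (x - y) = 0 := by rw [map_sub, hxy, sub_self]
    have h1 : Bᵀ *ᵥ (x - y) = 0 := congrArg Prod.fst h0
    have h2 : -(Aᵀ *ᵥ (x - y)) = 0 := congrArg Prod.snd h0
    exact sub_eq_zero.mp (hTker (x - y) (neg_eq_zero.mp h2) h1)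
  have hT'inj : Function.Injective T'lin := by
    intro x y hxy
    have h0 : T'lin (x - y) = 0 := by rw [map_sub, hxy, sub_self]
    have h1 : Bᵀ *ᵥ (x - y) = 0 := congrArg Prod.fst h0
    have h2 : Aᵀ *ᵥ (x - y) = 0 := congrArg Prod.snd h0
    exact sub_eq_zero.mp (hTker (x - y) h2 h1)
  have hphiT' : ∀ u, (T'lin u).1 ⬝ᵥ (T'lin u).2 = u ⬝ᵥ (M *ᵥ u) := by
    intro u
    rw [hT'1, hT'2, dotProduct_mulVec, vecMul_transpose, Matrix.mulVec_mulVec,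
      dotProduct_comm]
    have hABt : A * Bᵀ = Mᵀ := by rw [hM, Matrix.transpose_mul, Matrix.transpose_transpose]
    rw [hABt, dot_mulVec_transpose]
  have hQform : ∀ u : Fin p → ℝ, u ⬝ᵥ (Q *ᵥ u) = 2 * (u ⬝ᵥ (M *ᵥ u)) := by
    intro u
    rw [hQdef, Matrix.add_mulVec, dotProduct_add, dot_mulVec_transpose]
    ring
  have hcross : ∀ z : (Fin n → ℝ) × (Fin n → ℝ), ∀ u,
      z.1 ⬝ᵥ (Aᵀ *ᵥ u) + z.2 ⬝ᵥ (Bᵀ *ᵥ u) = u ⬝ᵥ fL z := by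
    intro z u
    rw [hfL, dotProduct_mulVec, vecMul_transpose, dotProduct_mulVec, vecMul_transpose,
      ← add_dotProduct, dotProduct_comm]
  have hGmono : ∀ z ∈ Submodule.map Tlin (Vneg M ⊔ Vzero M), 0 ≤ z.1 ⬝ᵥ z.2 := by
    intro z hz
    obtain ⟨u, hu, rfl⟩ := Submodule.mem_map.mp hz
    have hph := hphiT' u
    rw [hT'1, hT'2] at hph
    have h1 : (Tlin u).1 ⬝ᵥ (Tlin u).2 = -(u ⬝ᵥ (M *ᵥ u)) := by
      rw [hT1, hT2, dotProduct_neg, hph]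
    rw [h1]
    have h2 := hWq u hu
    have h3 := hQform u
    linarith
  have hWle : finrank ℝ ↥(Vneg M ⊔ Vzero M) ≤ n := by
    have h := dim_le_of_sign (n := n) 1 (Or.inl rfl)
      (S := Submodule.map Tlin (Vneg M ⊔ Vzero M))
      (by intro z hz; rw [one_mul]; exact hGmono z hz)
    rwa [finrank_map_inj hTinj] at h
  have hfLsurj : LinearMap.range fL = ⊤ := by
    rw [LinearMap.range_eq_top]
    intro y
    obtain ⟨x, hx⟩ := hCsurj y
    refine ⟨(x ∘ Sum.inl, x ∘ Sum.inr), ?_⟩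
    rw [hfL]
    have helim : Sum.elim (x ∘ Sum.inl) (x ∘ Sum.inr) = x := Sum.elim_comp_inl_inr x
    rw [← Matrix.fromCols_mulVec_sumElim, helim]
    exact hx
  have hLdim : finrank ℝ ↥L + p = n + n := by
    have h := LinearMap.finrank_range_add_finrank_ker fL
    rw [hfLsurj, finrank_top, finrank_prod_fun, finrank_fun, ← hLdef] at h
    omega
  -- forward: monotone ⟹ dim W = n
  have forward : (∀ z ∈ L, 0 ≤ z.1 ⬝ᵥ z.2) → finrank ℝ ↥(Vneg M ⊔ Vzero M) = n := by
    intro hLmono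
    have hmonoS : ∀ z ∈ L ⊔ Submodule.map T'lin (Vpos M), 0 ≤ 1 * (z.1 ⬝ᵥ z.2) := by
      intro z hz
      rw [one_mul]
      obtain ⟨l, hl, w, hw, rfl⟩ := Submodule.mem_sup.mp hz
      obtain ⟨u, hu, rfl⟩ := Submodule.mem_map.mp hw
      rw [phi_add]
      have hcross0 : l.1 ⬝ᵥ (T'lin u).2 + (T'lin u).1 ⬝ᵥ l.2 = 0 := by
        rw [hT'1, hT'2, dotProduct_comm (Bᵀ *ᵥ u) l.2, hcross l u,
          LinearMap.mem_ker.mp hl, dotProduct_zero]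
      have hphil := hLmono l hl
      have hphiw : 0 ≤ (T'lin u).1 ⬝ᵥ (T'lin u).2 := by
        rw [hphiT']
        rcases eq_or_ne u 0 with rfl | h0
        · simp
        · have h4 := hVq u hu h0
          have h5 := hQform u
          linarith
      linarith
    have hSle := dim_le_of_sign 1 (Or.inl rfl) hmonoS
    have hinf2 : L ⊓ Submodule.map T'lin (Vpos M) = ⊥ := by
      rw [eq_bot_iff]
      intro z hz
      obtain ⟨u, hu, hzeq⟩ := Submodule.mem_map.mp hz.2
      have hfz : fL z = 0 := hz.1
      have hkey : 2 * ((T'lin u).1 ⬝ᵥ (T'lin u).2) = u ⬝ᵥ fL (T'lin u) := by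
        rw [← hcross (T'lin u) u, hT'1, hT'2,
          dotProduct_comm (Aᵀ *ᵥ u) (Bᵀ *ᵥ u)]
        ring
      rw [hzeq, hfz, dotProduct_zero] at hkey
      have hu0 : u = 0 := by
        by_contra h0
        have h4 := hVq u hu h0
        rw [hQform] at h4
        rw [← hzeq, hphiT'] at hkey
        linarith
      rw [hu0, map_zero] at hzeq
      rw [← hzeq]
      simp [Submodule.mem_bot]
    have hcount := Submodule.finrank_sup_add_finrank_inf_eq L (Submodule.map T'lin (Vpos M))
    rw [hinf2, finrank_bot, finrank_map_inj hT'inj] at hcount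
    omega
  -- backward: dim W = n ⟹ monotone
  have backward : finrank ℝ ↥(Vneg M ⊔ Vzero M) = n → ∀ z ∈ L, 0 ≤ z.1 ⬝ᵥ z.2 := by
    intro hWn z hzL
    by_contra hneg
    push_neg at hneg
    have hmono2 : ∀ w ∈ Submodule.map T'lin (Vneg M ⊔ Vzero M) ⊔ (ℝ ∙ z),
        0 ≤ (-1 : ℝ) * (w.1 ⬝ᵥ w.2) := by
      intro w hw
      obtain ⟨a, ha, b, hb, rfl⟩ := Submodule.mem_sup.mp hw
      obtain ⟨u, hu, rfl⟩ := Submodule.mem_map.mp ha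
      obtain ⟨t, rfl⟩ := Submodule.mem_span_singleton.mp hb
      rw [phi_add]
      have hb1 : (t • z).1 = t • z.1 := rfl
      have hb2 : (t • z).2 = t • z.2 := rfl
      have hcr : (T'lin u).1 ⬝ᵥ (t • z).2 + (t • z).1 ⬝ᵥ (T'lin u).2 = 0 := by
        rw [hb1, hb2, dotProduct_smul, smul_dotProduct]
        have hzz : (T'lin u).1 ⬝ᵥ z.2 + z.1 ⬝ᵥ (T'lin u).2 = 0 := by
          rw [hT'1, hT'2, dotProduct_comm (Bᵀ *ᵥ u) z.2, add_comm, hcross z u,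
            LinearMap.mem_ker.mp hzL, dotProduct_zero]
        rw [smul_eq_mul, smul_eq_mul, ← mul_add, hzz, mul_zero]
      have hq1 : (T'lin u).1 ⬝ᵥ (T'lin u).2 ≤ 0 := by
        rw [hphiT']
        have h4 := hWq u hu
        have h5 := hQform u
        linarith
      have hq2 : (t • z).1 ⬝ᵥ (t • z).2 ≤ 0 := by
        rw [hb1, hb2, smul_dotProduct, dotProduct_smul, smul_eq_mul, smul_eq_mul]
        nlinarith [mul_self_nonneg t]
      linarith
    have hS2le := dim_le_of_sign (-1) (Or.inr rfl) hmono2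
    have hmapfin : finrank ℝ ↥(Submodule.map T'lin (Vneg M ⊔ Vzero M)) = n := by
      rw [finrank_map_inj hT'inj, hWn]
    have heq2 : Submodule.map T'lin (Vneg M ⊔ Vzero M) =
        Submodule.map T'lin (Vneg M ⊔ Vzero M) ⊔ (ℝ ∙ z) := by
      apply Submodule.eq_of_le_of_finrank_le le_sup_left
      rw [hmapfin]
      exact hS2le
    have hzmem : z ∈ Submodule.map T'lin (Vneg M ⊔ Vzero M) := by
      rw [heq2]
      exact Submodule.mem_sup_right (Submodule.mem_span_singleton_self z)
    obtain ⟨u₀, hu₀, hzeq⟩ := Submodule.mem_map.mp hzmem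
    have hkey : 2 * ((T'lin u₀).1 ⬝ᵥ (T'lin u₀).2) = u₀ ⬝ᵥ fL (T'lin u₀) := by
      rw [← hcross (T'lin u₀) u₀, hT'1, hT'2,
        dotProduct_comm (Aᵀ *ᵥ u₀) (Bᵀ *ᵥ u₀)]
      ring
    rw [hzeq, LinearMap.mem_ker.mp hzL, dotProduct_zero] at hkey
    linarith
  -- maximal ⟹ dim W = n
  have maxdim : IsMaxMonotoneSet
      (↑(Submodule.map Tlin (Vneg M ⊔ Vzero M)) : Set ((Fin n → ℝ) × (Fin n → ℝ))) →
      finrank ℝ ↥(Vneg M ⊔ Vzero M) = n := by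
    intro hmax
    by_contra hne
    have hlt : finrank ℝ ↥(Vneg M ⊔ Vzero M) < n := lt_of_le_of_ne hWle hne
    set Dmap : ((Fin n → ℝ) × (Fin n → ℝ)) →ₗ[ℝ] (Fin p → ℝ) :=
      (B.mulVecLin).comp (LinearMap.snd ℝ _ _) - (A.mulVecLin).comp (LinearMap.fst ℝ _ _)
      with hDdef
    have hD : ∀ z : (Fin n → ℝ) × (Fin n → ℝ), Dmap z = B *ᵥ z.2 - A *ᵥ z.1 :=
      fun z => rfl
    set bil : (Fin p → ℝ) →ₗ[ℝ] ((Vneg M ⊔ Vzero M : Submodule ℝ (Fin p → ℝ)) →ₗ[ℝ] ℝ) :=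
      LinearMap.mk₂ ℝ (fun (y : Fin p → ℝ) (u : (Vneg M ⊔ Vzero M : Submodule ℝ (Fin p → ℝ))) =>
        (u : Fin p → ℝ) ⬝ᵥ y)
        (by intros; simp [dotProduct_add])
        (by intros; simp [dotProduct_smul])
        (by intros; simp [add_dotProduct])
        (by intros; simp [smul_dotProduct])
      with hbildef
    set Phi := bil.comp Dmap with hPhidef
    have hrange : finrank ℝ ↥(LinearMap.range Phi) ≤ finrank ℝ ↥(Vneg M ⊔ Vzero M) := by
      have h1 := Submodule.finrank_le (LinearMap.range Phi)
      rwa [Module.finrank_linearMap, finrank_self, mul_one] at h1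
    have hker := LinearMap.finrank_range_add_finrank_ker Phi
    rw [finrank_prod_fun] at hker
    have hexz : ∃ z₀ ∈ LinearMap.ker Phi, 0 < z₀.1 ⬝ᵥ z₀.2 := by
      by_contra hno
      push_neg at hno
      have h2 := dim_le_of_sign (-1) (Or.inr rfl) (S := LinearMap.ker Phi)
        (by intro w hw; have := hno w hw; nlinarith)
      omega
    obtain ⟨z₀, hz₀K, hz₀pos⟩ := hexz
    have hz₀orth : ∀ u, ∀ hu : u ∈ Vneg M ⊔ Vzero M, u ⬝ᵥ Dmap z₀ = 0 := by
      intro u hu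
      have h0 : Phi z₀ = 0 := hz₀K
      exact DFunLike.congr_fun h0 ⟨u, hu⟩
    have hcross0 : ∀ u ∈ Vneg M ⊔ Vzero M,
        z₀.1 ⬝ᵥ (Tlin u).2 + (Tlin u).1 ⬝ᵥ z₀.2 = 0 := by
      intro u hu
      rw [hT1, hT2, dotProduct_neg]
      have e1 : z₀.1 ⬝ᵥ (Aᵀ *ᵥ u) = (A *ᵥ z₀.1) ⬝ᵥ u := by
        rw [dotProduct_mulVec, vecMul_transpose]
      have e2 : (Bᵀ *ᵥ u) ⬝ᵥ z₀.2 = (B *ᵥ z₀.2) ⬝ᵥ u := by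
        rw [dotProduct_comm, dotProduct_mulVec, vecMul_transpose]
      have e3 : -((A *ᵥ z₀.1) ⬝ᵥ u) + (B *ᵥ z₀.2) ⬝ᵥ u =
          (B *ᵥ z₀.2 - A *ᵥ z₀.1) ⬝ᵥ u := by
        rw [sub_dotProduct]; ring
      rw [e1, e2, e3, ← hD, dotProduct_comm]
      exact hz₀orth u hu
    have hrel : ∀ b ∈ (↑(Submodule.map Tlin (Vneg M ⊔ Vzero M)) :
        Set ((Fin n → ℝ) × (Fin n → ℝ))), 0 ≤ (z₀.1 - b.1) ⬝ᵥ (z₀.2 - b.2) := by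
      intro b hb
      obtain ⟨u, hu, rfl⟩ := Submodule.mem_map.mp hb
      have h4 : (z₀ - Tlin u).1 ⬝ᵥ (z₀ - Tlin u).2 =
          z₀.1 ⬝ᵥ z₀.2 + (Tlin u).1 ⬝ᵥ (Tlin u).2 := by
        rw [phi_sub]
        have := hcross0 u hu
        linarith
      have h5 : 0 ≤ (Tlin u).1 ⬝ᵥ (Tlin u).2 :=
        hGmono _ (Submodule.mem_map_of_mem hu)
      have h6 : (z₀.1 - (Tlin u).1) ⬝ᵥ (z₀.2 - (Tlin u).2) =
          (z₀ - Tlin u).1 ⬝ᵥ (z₀ - Tlin u).2 := rfl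
      rw [h6, h4]
      linarith
    have hz₀mem := hmax.2 z₀ hrel
    obtain ⟨u₀, hu₀, hz₀eq⟩ := Submodule.mem_map.mp hz₀mem
    have h7 := hcross0 u₀ hu₀
    rw [hz₀eq] at h7
    linarith
  constructor
  · intro hmon
    have hLm : ∀ z ∈ L, 0 ≤ z.1 ⬝ᵥ z.2 := by
      intro z hz
      have h0 : (0 : (Fin n → ℝ) × (Fin n → ℝ)) ∈
          {q : (Fin n → ℝ) × (Fin n → ℝ) | A *ᵥ q.1 + B *ᵥ q.2 = 0} := by
        simp
      have hzset : z ∈ {q : (Fin n → ℝ) × (Fin n → ℝ) | A *ᵥ q.1 + B *ᵥ q.2 = 0} := by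
        have h1 := LinearMap.mem_ker.mp hz
        rw [hfL] at h1
        exact h1
      simpa using hmon z hzset 0 h0
    have hWn := forward hLm
    rw [hsetG]
    exact isMax_of_dim hGmono (by rw [finrank_map_inj hTinj]; exact hWn)
  · intro hmax
    rw [hsetG] at hmax
    have hWn := maxdim hmax
    have hLm := backward hWn
    intro a ha b hb
    have haL : a ∈ L := LinearMap.mem_ker.mpr (by rw [hfL]; exact ha)
    have hbL : b ∈ L := LinearMap.mem_ker.mpr (by rw [hfL]; exact hb)
    exact hLm _ (L.sub_mem haL hbL)
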